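/- Let m >= 0 and n >= 1 be integers and write n = 2^e * N with e >= 0 an integer and N an odd positive integer. Then Y^(m)(n) = #A1 + #B1 - #A2 - #B2, where A1 = { (d1,d2) in N^2 : d1*d2 = N and d2 - 2^e*d1 is odd and >= 2m+1 }, A2 = { (d1,d2) in N^2 : d1*d2 = N and d2 - 2^{e+1}*d1 is odd and >= 2m+1 }, B1 = { (d1,d2) in N^2 : d1*d2 = N and 2^{e+1}*d2 - d1 is odd and >= 2m+1 }, B2 = { (d1,d2) in N^2 : d1*d2 = N and 2^e*d2 - d1 is odd and >= 2m+1 }, and #S denotes the cardinality of a finite set S. -/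

import Mathlib

/-- The geometric series `1/(1-q^k) = ∑_{j ≥ 0} q^{k·j}` as a formal power series over `ℤ`:
its coefficient at `q^n` is `1` exactly when `k ∣ n`. -/
def geomSer (k : ℕ) : PowerSeries ℤ := PowerSeries.mk fun n => if k ∣ n then 1 else 0

/-- The formal power series `∑_{k ≥ 1} (-1)^k q^{k(3k+1)+2mk}/(1-q^{2k})`.
For a fixed `n`, only the (finitely many) summands with `1 ≤ k ≤ n` can contribute to the
coefficient of `q^n` (for `k > n` the lowest exponent `k(3k+1)+2mk` exceeds `n`), so the
coefficient of `q^n` of the infinite sum is the corresponding finite sum of coefficients. -/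
noncomputable def seriesA (m : ℕ) : PowerSeries ℤ :=
  PowerSeries.mk fun n => ∑ k ∈ Finset.Icc 1 n,
    (PowerSeries.coeff (R := ℤ) n)
      (PowerSeries.C (R := ℤ) ((-1) ^ k) * PowerSeries.X ^ (k * (3 * k + 1) + 2 * m * k) *
        geomSer (2 * k))

/-- The formal power series `∑_{k ≥ 1} (-1)^k q^{k(k+1)/2+mk}/(1-q^k)` (same convention). -/
noncomputable def seriesB (m : ℕ) : PowerSeries ℤ :=
  PowerSeries.mk fun n => ∑ k ∈ Finset.Icc 1 n,
    (PowerSeries.coeff (R := ℤ) n)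
      (PowerSeries.C (R := ℤ) ((-1) ^ k) * PowerSeries.X ^ (k * (k + 1) / 2 + m * k) * geomSer k)

/-- The formal power series `∑_{k ≥ 1} (-1)^k q^{k(k+1)+2mk}/(1-q^{2k})` (same convention). -/
noncomputable def seriesC (m : ℕ) : PowerSeries ℤ :=
  PowerSeries.mk fun n => ∑ k ∈ Finset.Icc 1 n,
    (PowerSeries.coeff (R := ℤ) n)
      (PowerSeries.C (R := ℤ) ((-1) ^ k) * PowerSeries.X ^ (k * (k + 1) + 2 * m * k) *
        geomSer (2 * k))

lemma coeff_term (a : ℤ) (E K n : ℕ) :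
    (PowerSeries.coeff (R := ℤ) n) (PowerSeries.C (R := ℤ) a * PowerSeries.X ^ E * geomSer K)
      = if E ≤ n ∧ K ∣ n - E then a else 0 := by
  rw [mul_right_comm, PowerSeries.coeff_mul_X_pow', geomSer]
  by_cases h1 : E ≤ n
  · rw [if_pos h1, PowerSeries.coeff_C_mul, PowerSeries.coeff_mk]
    by_cases h2 : K ∣ n - E
    · rw [if_pos h2, if_pos ⟨h1, h2⟩, mul_one]
    · rw [if_neg h2, if_neg (by tauto), mul_zero]
  · rw [if_neg h1, if_neg (by tauto)]

def cond' (m k M : ℕ) : Prop :=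
  ∃ l, M = k * l ∧ Odd ((l : ℤ) - k) ∧ (k : ℤ) + (2 * m + 1) ≤ l

lemma condC_iff (m k n : ℕ) :
    (k * (k + 1) + 2 * m * k ≤ n ∧ 2 * k ∣ n - (k * (k + 1) + 2 * m * k)) ↔ cond' m k n := by
  constructor
  · rintro ⟨hle, j, hj⟩
    refine ⟨k + 1 + 2 * m + 2 * j, ?_, ⟨(m : ℤ) + j, by push_cast; ring⟩, by push_cast; omega⟩
    have : k * (k + 1 + 2 * m + 2 * j) = k * (k + 1) + 2 * m * k + 2 * k * j := by ring
    omega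
  · rintro ⟨l, rfl, hodd, hle⟩
    have hkl : k + (2 * m + 1) ≤ l := by exact_mod_cast hle
    have hodd' : Odd (l - k) := by
      rw [← Int.odd_coe_nat]
      rwa [Int.ofNat_sub (by omega)]
    obtain ⟨t, ht⟩ := hodd'
    have hm : m ≤ t := by omega
    obtain ⟨j, rfl⟩ := Nat.exists_eq_add_of_le hm
    have hl : l = k + 1 + 2 * m + 2 * j := by omega
    refine ⟨?_, j, ?_⟩ <;>
    · have : k * l = k * (k + 1) + 2 * m * k + 2 * k * j := by rw [hl]; ring
      omega

lemma condB_iff (m k n : ℕ) :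
    (k * (k + 1) / 2 + m * k ≤ n ∧ k ∣ n - (k * (k + 1) / 2 + m * k)) ↔ cond' m k (2 * n) := by
  have h2 : 2 * (k * (k + 1) / 2) = k * (k + 1) :=
    Nat.mul_div_cancel' (Nat.even_mul_succ_self k).two_dvd
  constructor
  · rintro ⟨hle, j, hj⟩
    refine ⟨k + 1 + 2 * m + 2 * j, ?_, ⟨(m : ℤ) + j, by push_cast; ring⟩, by push_cast; omega⟩
    have : k * (k + 1 + 2 * m + 2 * j) = k * (k + 1) + 2 * (m * k) + 2 * (k * j) := by ring
    omega
  · rintro ⟨l, h2n, hodd, hle⟩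
    have hkl : k + (2 * m + 1) ≤ l := by exact_mod_cast hle
    have hodd' : Odd (l - k) := by
      rw [← Int.odd_coe_nat]
      rwa [Int.ofNat_sub (by omega)]
    obtain ⟨t, ht⟩ := hodd'
    have hm : m ≤ t := by omega
    obtain ⟨j, rfl⟩ := Nat.exists_eq_add_of_le hm
    have hl : l = k + 1 + 2 * m + 2 * j := by omega
    refine ⟨?_, j, ?_⟩ <;>
    · have : k * l = k * (k + 1) + 2 * (m * k) + 2 * (k * j) := by rw [hl]; ring
      omega

open scoped Classical

lemma card_even (m f N : ℕ) (hN : Odd N) :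
    ((((Finset.Icc 1 (2 ^ f * N)).filter (fun k => cond' m k (2 ^ f * N))).filter Even)).card
    = (N.divisorsAntidiagonal.filter (fun p => Odd ((p.2 : ℤ) - 2 ^ f * p.1) ∧
        2 * (m : ℤ) + 1 ≤ (p.2 : ℤ) - 2 ^ f * p.1)).card := by
  have hN0 : N ≠ 0 := by rintro rfl; simp at hN
  have hp0 : (0 : ℕ) < 2 ^ f := pow_pos (by norm_num) f
  have hdvd : ∀ k, k ∈ (((Finset.Icc 1 (2 ^ f * N)).filter
      (fun k => cond' m k (2 ^ f * N))).filter Even) → 2 ^ f ∣ k := by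
    intro k hk
    simp only [Finset.mem_filter, Finset.mem_Icc] at hk
    obtain ⟨⟨⟨hk1, hkM⟩, l, hMl, hodd, hle⟩, hkev⟩ := hk
    have hlodd : Odd l := by
      have hek : Even (k : ℤ) := by exact_mod_cast hkev
      exact_mod_cast (Int.odd_sub.mp hodd).mpr hek
    refine (Nat.Coprime.pow_left f ((Nat.coprime_two_left).mpr hlodd)).dvd_of_dvd_mul_right
      (m := k) ⟨N, by omega⟩
  apply Finset.card_bij' (fun k _ => ((k / 2 ^ f : ℕ), 2 ^ f * N / k)) (fun p _ => 2 ^ f * p.1)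
  · intro k hk
    have hd := hdvd k hk
    simp only [Finset.mem_filter, Finset.mem_Icc] at hk
    obtain ⟨⟨⟨hk1, hkM⟩, l, hMl, hodd, hle⟩, hkev⟩ := hk
    obtain ⟨d, rfl⟩ := hd
    have hdl : d * l = N := Nat.eq_of_mul_eq_mul_left hp0 (by rw [hMl]; ring)
    have hq : 2 ^ f * d / 2 ^ f = d := Nat.mul_div_cancel_left d hp0
    have hq2 : 2 ^ f * N / (2 ^ f * d) = l := by rw [hMl]; exact Nat.mul_div_cancel_left l (by omega)
    simp only [hq, hq2, Finset.mem_filter, Nat.mem_divisorsAntidiagonal]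
    refine ⟨⟨hdl, hN0⟩, by push_cast at hodd ⊢; exact hodd, by push_cast at hle ⊢; omega⟩
  · intro p hp
    simp only [Finset.mem_filter, Nat.mem_divisorsAntidiagonal] at hp
    obtain ⟨⟨hprod, -⟩, hodd, hle⟩ := hp
    have hp1 : 0 < p.1 := by
      rcases Nat.eq_zero_or_pos p.1 with h | h
      · exfalso; rw [h, zero_mul] at hprod; exact hN0 hprod.symm
      · exact h
    have hp2 : 0 < p.2 := by
      rcases Nat.eq_zero_or_pos p.2 with h | h
      · exfalso; rw [h, mul_zero] at hprod; exact hN0 hprod.symm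
      · exact h
    have h2odd : Odd p.2 := by
      rcases Nat.even_or_odd p.2 with h | h
      · exact absurd (hprod ▸ h.mul_left p.1) (Nat.not_even_iff_odd.mpr hN)
      · exact h
    simp only [Finset.mem_filter, Finset.mem_Icc]
    refine ⟨⟨⟨?_, ?_⟩, p.2, ?_, ?_, ?_⟩, ?_⟩
    · exact Nat.one_le_iff_ne_zero.mpr (Nat.mul_pos hp0 hp1).ne'
    · exact Nat.mul_le_mul_left _ (Nat.le_of_dvd (Nat.pos_of_ne_zero hN0) ⟨p.2, hprod.symm⟩)
    · rw [← hprod]; ring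
    · push_cast; exact hodd
    · push_cast; omega
    · have hodd' : Odd ((p.2 : ℤ) - ((2 ^ f * p.1 : ℕ) : ℤ)) := by push_cast; exact hodd
      have h2 : Odd ((p.2 : ℕ) : ℤ) := by exact_mod_cast h2odd
      have : Even ((2 ^ f * p.1 : ℕ) : ℤ) := (Int.odd_sub.mp hodd').mp h2
      exact_mod_cast this
  · intro k hk
    exact Nat.mul_div_cancel' (hdvd k hk) 
  · intro p hp
    simp only [Finset.mem_filter, Nat.mem_divisorsAntidiagonal] at hp
    obtain ⟨⟨hprod, -⟩, -, -⟩ := hp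
    have hp1 : 0 < p.1 := by
      rcases Nat.eq_zero_or_pos p.1 with h | h
      · exfalso; rw [h, zero_mul] at hprod; exact hN0 hprod.symm
      · exact h
    have h1 : 2 ^ f * p.1 / 2 ^ f = p.1 := Nat.mul_div_cancel_left _ hp0
    have h2 : 2 ^ f * N / (2 ^ f * p.1) = p.2 := by
      rw [← hprod, ← mul_assoc]; exact Nat.mul_div_cancel_left _ (Nat.mul_pos hp0 hp1)
    rw [h1, h2]

lemma card_odd (m f N : ℕ) (hN : Odd N) :
    ((((Finset.Icc 1 (2 ^ f * N)).filter (fun k => cond' m k (2 ^ f * N))).filter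
        (fun k => ¬ Even k))).card
    = (N.divisorsAntidiagonal.filter (fun p => Odd (2 ^ f * (p.2 : ℤ) - p.1) ∧
        2 * (m : ℤ) + 1 ≤ 2 ^ f * (p.2 : ℤ) - p.1)).card := by
  have hN0 : N ≠ 0 := by rintro rfl; simp at hN
  have hp0 : (0 : ℕ) < 2 ^ f := pow_pos (by norm_num) f
  apply Finset.card_bij' (fun k _ => ((k : ℕ), 2 ^ f * N / k / 2 ^ f)) (fun p _ => p.1)
  · intro k hk
    simp only [Finset.mem_filter, Finset.mem_Icc] at hk
    obtain ⟨⟨⟨hk1, hkM⟩, l, hMl, hodd, hle⟩, hkodd⟩ := hk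
    have hkodd' : Odd k := Nat.not_even_iff_odd.mp hkodd
    have hd : 2 ^ f ∣ l := by
      refine (Nat.Coprime.pow_left f ((Nat.coprime_two_left).mpr hkodd')).dvd_of_dvd_mul_left
        (m := k) ⟨N, by omega⟩
    obtain ⟨d, rfl⟩ := hd
    have hdl : k * d = N := by
      refine Nat.eq_of_mul_eq_mul_left hp0 ?_
      rw [hMl]; ring
    have hq2 : 2 ^ f * N / k / 2 ^ f = d := by
      rw [hMl, Nat.mul_div_cancel_left _ (by omega), Nat.mul_div_cancel_left d hp0]
    simp only [hq2, Finset.mem_filter, Nat.mem_divisorsAntidiagonal]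
    refine ⟨⟨hdl, hN0⟩, by push_cast at hodd ⊢; exact hodd, by push_cast at hle ⊢; omega⟩
  · intro p hp
    simp only [Finset.mem_filter, Nat.mem_divisorsAntidiagonal] at hp
    obtain ⟨⟨hprod, -⟩, hodd, hle⟩ := hp
    have hp1 : 0 < p.1 := by
      rcases Nat.eq_zero_or_pos p.1 with h | h
      · exfalso; rw [h, zero_mul] at hprod; exact hN0 hprod.symm
      · exact h
    have h1odd : Odd p.1 := by
      rcases Nat.even_or_odd p.1 with h | h
      · exact absurd (hprod ▸ h.mul_right p.2) (Nat.not_even_iff_odd.mpr hN)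
      · exact h
    simp only [Finset.mem_filter, Finset.mem_Icc]
    refine ⟨⟨⟨hp1, ?_⟩, 2 ^ f * p.2, ?_, ?_, ?_⟩, ?_⟩
    · calc p.1 ≤ N := Nat.le_of_dvd (Nat.pos_of_ne_zero hN0) ⟨p.2, hprod.symm⟩
        _ ≤ 2 ^ f * N := Nat.le_mul_of_pos_left N hp0
    · rw [← hprod]; ring
    · push_cast; exact hodd
    · push_cast; omega
    · exact Nat.not_even_iff_odd.mpr h1odd
  · intro k hk; rfl
  · intro p hp
    simp only [Finset.mem_filter, Nat.mem_divisorsAntidiagonal] at hp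
    obtain ⟨⟨hprod, -⟩, -, -⟩ := hp
    have hp1 : 0 < p.1 := by
      rcases Nat.eq_zero_or_pos p.1 with h | h
      · exfalso; rw [h, zero_mul] at hprod; exact hN0 hprod.symm
      · exact h
    have h2 : 2 ^ f * N / p.1 / 2 ^ f = p.2 := by
      rw [← hprod]
      rw [show 2 ^ f * (p.1 * p.2) = p.1 * (2 ^ f * p.2) by ring,
        Nat.mul_div_cancel_left _ hp1, Nat.mul_div_cancel_left _ hp0]
    rw [h2]

lemma key (m f N : ℕ) (hN : Odd N) :
    (∑ k ∈ Finset.Icc 1 (2 ^ f * N), if cond' m k (2 ^ f * N) then ((-1 : ℤ)) ^ k else 0)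
    = ((N.divisorsAntidiagonal.filter (fun p => Odd ((p.2 : ℤ) - 2 ^ f * p.1) ∧
          2 * (m : ℤ) + 1 ≤ (p.2 : ℤ) - 2 ^ f * p.1)).card : ℤ)
    - ((N.divisorsAntidiagonal.filter (fun p => Odd (2 ^ f * (p.2 : ℤ) - p.1) ∧
          2 * (m : ℤ) + 1 ≤ 2 ^ f * (p.2 : ℤ) - p.1)).card : ℤ) := by
  rw [← Finset.sum_filter]
  set S := (Finset.Icc 1 (2 ^ f * N)).filter (fun k => cond' m k (2 ^ f * N)) with hS
  rw [← Finset.sum_filter_add_sum_filter_not S Even]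
  have hEv : ∑ k ∈ S.filter Even, ((-1 : ℤ)) ^ k = ((S.filter Even).card : ℤ) := by
    rw [Finset.sum_congr rfl (fun k hk => (Finset.mem_filter.mp hk).2.neg_one_pow)]
    simp
  have hOd : ∑ k ∈ S.filter (fun k => ¬ Even k), ((-1 : ℤ)) ^ k
      = -(((S.filter (fun k => ¬ Even k)).card : ℤ)) := by
    rw [Finset.sum_congr rfl (fun k hk =>
      (Nat.not_even_iff_odd.mp (Finset.mem_filter.mp hk).2).neg_one_pow)]
    simp
  rw [hEv, hOd, hS, card_even m f N hN, card_odd m f N hN]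
  ring

lemma set_card (N : ℕ) (hN0 : N ≠ 0) (g : ℕ × ℕ → ℤ) (c : ℤ) :
    {p : ℕ × ℕ | 0 < p.1 ∧ 0 < p.2 ∧ p.1 * p.2 = N ∧ Odd (g p) ∧ c ≤ g p}.ncard
    = (N.divisorsAntidiagonal.filter (fun p => Odd (g p) ∧ c ≤ g p)).card := by
  rw [← Set.ncard_coe_finset]
  congr 1
  ext p
  simp only [Finset.coe_filter, Set.mem_setOf_eq, Nat.mem_divisorsAntidiagonal]
  constructor
  · rintro ⟨h1, h2, h3, h4, h5⟩; exact ⟨⟨h3, hN0⟩, h4, h5⟩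
  · rintro ⟨⟨h3, -⟩, h4, h5⟩
    have hp1 : p.1 ≠ 0 := by rintro h; rw [h, zero_mul] at h3; exact hN0 h3.symm
    have hp2 : p.2 ≠ 0 := by rintro h; rw [h, mul_zero] at h3; exact hN0 h3.symm
    exact ⟨Nat.pos_of_ne_zero hp1, Nat.pos_of_ne_zero hp2, h3, h4, h5⟩


/-- Let `m ≥ 0` and `n ≥ 1` be integers, write `n = 2^e · N` with `N` odd,
and let `Y^(m)` be defined by `∑_{n ≥ 0} Y^(m)(n) q^n = ∑_{k≥1} (-1)^k
q^{k(k+1)+2mk}/(1-q^{2k}) - ∑_{k≥1} (-1)^k q^{k(k+1)/2+mk}/(1-q^k)`. Then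
`Y^(m)(n) = #A₁ + #B₁ - #A₂ - #B₂`, where (as subsets of pairs of positive integers)
`A₁ = {(d₁,d₂) : d₁d₂ = N, d₂ - 2^e d₁ odd and ≥ 2m+1}`,
`A₂ = {(d₁,d₂) : d₁d₂ = N, d₂ - 2^{e+1} d₁ odd and ≥ 2m+1}`,
`B₁ = {(d₁,d₂) : d₁d₂ = N, 2^{e+1} d₂ - d₁ odd and ≥ 2m+1}`,
`B₂ = {(d₁,d₂) : d₁d₂ = N, 2^e d₂ - d₁ odd and ≥ 2m+1}`. -/
theorem stmt9 (m : ℕ) (Y : ℕ → ℤ)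
    (hY : PowerSeries.mk Y = seriesC m - seriesB m)
    (n : ℕ) (hn : 1 ≤ n) (e N : ℕ) (hN : Odd N) (hne : n = 2 ^ e * N) :
    Y n =
      (Set.ncard {p : ℕ × ℕ | 0 < p.1 ∧ 0 < p.2 ∧ p.1 * p.2 = N ∧
          Odd ((p.2 : ℤ) - 2 ^ e * (p.1 : ℤ)) ∧
          2 * (m : ℤ) + 1 ≤ (p.2 : ℤ) - 2 ^ e * (p.1 : ℤ)} : ℤ)
      + (Set.ncard {p : ℕ × ℕ | 0 < p.1 ∧ 0 < p.2 ∧ p.1 * p.2 = N ∧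
          Odd (2 ^ (e + 1) * (p.2 : ℤ) - (p.1 : ℤ)) ∧
          2 * (m : ℤ) + 1 ≤ 2 ^ (e + 1) * (p.2 : ℤ) - (p.1 : ℤ)} : ℤ)
      - (Set.ncard {p : ℕ × ℕ | 0 < p.1 ∧ 0 < p.2 ∧ p.1 * p.2 = N ∧
          Odd ((p.2 : ℤ) - 2 ^ (e + 1) * (p.1 : ℤ)) ∧
          2 * (m : ℤ) + 1 ≤ (p.2 : ℤ) - 2 ^ (e + 1) * (p.1 : ℤ)} : ℤ)
      - (Set.ncard {p : ℕ × ℕ | 0 < p.1 ∧ 0 < p.2 ∧ p.1 * p.2 = N ∧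
          Odd (2 ^ e * (p.2 : ℤ) - (p.1 : ℤ)) ∧
          2 * (m : ℤ) + 1 ≤ 2 ^ e * (p.2 : ℤ) - (p.1 : ℤ)} : ℤ) := by
  have hN0 : N ≠ 0 := by rintro rfl; simp at hN
  have hYn : Y n = (PowerSeries.coeff (R := ℤ) n) (seriesC m) - (PowerSeries.coeff (R := ℤ) n) (seriesB m) := by
    have := congrArg (PowerSeries.coeff (R := ℤ) n) hY
    simpa using this
  have hC : (PowerSeries.coeff (R := ℤ) n) (seriesC m)
      = ∑ k ∈ Finset.Icc 1 n, if cond' m k n then ((-1 : ℤ)) ^ k else 0 := by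
    rw [seriesC, PowerSeries.coeff_mk]
    refine Finset.sum_congr rfl fun k hk => ?_
    rw [coeff_term]
    exact if_congr (condC_iff m k n) rfl rfl
  have hB : (PowerSeries.coeff (R := ℤ) n) (seriesB m)
      = ∑ k ∈ Finset.Icc 1 (2 * n), if cond' m k (2 * n) then ((-1 : ℤ)) ^ k else 0 := by
    have step1 : (PowerSeries.coeff (R := ℤ) n) (seriesB m)
        = ∑ k ∈ Finset.Icc 1 n, if cond' m k (2 * n) then ((-1 : ℤ)) ^ k else 0 := by
      rw [seriesB, PowerSeries.coeff_mk]
      refine Finset.sum_congr rfl fun k hk => ?_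
      rw [coeff_term]
      exact if_congr (condB_iff m k n) rfl rfl
    rw [step1]
    refine Finset.sum_subset (Finset.Icc_subset_Icc_right (by omega)) ?_
    intro k hk2 hkn
    have hnc : ¬ cond' m k (2 * n) := by
      rintro ⟨l, h2n, hodd, hle⟩
      simp only [Finset.mem_Icc] at hk2 hkn
      have hkl : k + (2 * m + 1) ≤ l := by exact_mod_cast hle
      have hn1 : n + 1 ≤ k := by omega
      have hml : (n + 1) * (n + 2) ≤ k * l := Nat.mul_le_mul (by omega) (by omega)
      nlinarith
    rw [if_neg hnc]
  have h2n : 2 * n = 2 ^ (e + 1) * N := by rw [hne]; ring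
  have hkey1 := key m e N hN
  have hkey2 := key m (e + 1) N hN
  rw [← hne] at hkey1
  rw [← h2n] at hkey2
  have hA1 := set_card N hN0 (fun p => (p.2 : ℤ) - 2 ^ e * (p.1 : ℤ)) (2 * (m : ℤ) + 1)
  have hB1 := set_card N hN0 (fun p => 2 ^ (e + 1) * (p.2 : ℤ) - (p.1 : ℤ)) (2 * (m : ℤ) + 1)
  have hA2 := set_card N hN0 (fun p => (p.2 : ℤ) - 2 ^ (e + 1) * (p.1 : ℤ)) (2 * (m : ℤ) + 1)
  have hB2 := set_card N hN0 (fun p => 2 ^ e * (p.2 : ℤ) - (p.1 : ℤ)) (2 * (m : ℤ) + 1)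
  rw [hYn, hC, hB, hkey1, hkey2, hA1, hB1, hA2, hB2]
  ring
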